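/- Let f ∈ C¹([a,b]) be a polynomial of degree at most p with f(x_F) = 0 for some x_F ∈ [a,b], and write f(x) = Σ_{k=1}^p c_k (x − x_F)^k / k! with c_k = f^{(k)}(x_F). Then ∫_a^b (f'(x))² dx ≤ p Σ_{k=1}^p c_k² (b−a)^{2k−1} / (((k−1)!)² (2k−1)). -/

import Mathlib

/-- 1D core of the ghost-penalty inverse inequality: if
`f(x) = Σ_{k=1}^p c_k (x − x_F)^k / k!` on `[a,b]` (a polynomial of degree ≤ p
vanishing at `x_F ∈ [a,b]`, with Taylor coefficients `c_k = f⁽ᵏ⁾(x_F)`), then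
`∫_a^b (f'(x))² dx ≤ p Σ_{k=1}^p c_k² (b−a)^{2k−1} / (((k−1)!)² (2k−1))`. -/
theorem stmt_11 (p : ℕ) (a b xF : ℝ) (hab : a ≤ b) (hxF : xF ∈ Set.Icc a b)
    (c : ℕ → ℝ) (f : ℝ → ℝ)
    (hf : ∀ x, f x = ∑ k ∈ Finset.Icc 1 p, c k * (x - xF) ^ k / (Nat.factorial k)) :
    ∫ x in a..b, (deriv f x) ^ 2 ≤
      (p : ℝ) * ∑ k ∈ Finset.Icc 1 p,
        (c k) ^ 2 * (b - a) ^ (2 * k - 1) /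
          (((Nat.factorial (k - 1) : ℝ)) ^ 2 * (2 * (k : ℝ) - 1)) := by
  obtain ⟨hax, hxb⟩ := hxF
  have hfx : f = fun x => ∑ k ∈ Finset.Icc 1 p, c k * (x - xF) ^ k / (Nat.factorial k) :=
    funext hf
  set g : ℝ → ℝ := fun x => ∑ k ∈ Finset.Icc 1 p,
      c k * (x - xF) ^ (k - 1) / (Nat.factorial (k - 1)) with hg
  have hderiv : ∀ x, HasDerivAt f (g x) x := by
    intro x
    rw [hfx]
    apply HasDerivAt.fun_sum
    intro k hk
    have hk1 : 1 ≤ k := (Finset.mem_Icc.mp hk).1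
    have h1 : HasDerivAt (fun y : ℝ => (y - xF) ^ k) (k * (x - xF) ^ (k - 1)) x := by
      simpa using ((hasDerivAt_id x).sub_const xF).fun_pow k
    have h2 := (h1.const_mul (c k)).div_const (Nat.factorial k : ℝ)
    convert h2 using 1
    case e'_4 => rfl
    have hfac : (Nat.factorial k : ℝ) = k * Nat.factorial (k - 1) := by
      rw [← Nat.mul_factorial_pred (by omega : k ≠ 0)]; push_cast; ring
    rw [hfac]
    have hk0 : (k : ℝ) ≠ 0 := by positivity
    have hf0 : (Nat.factorial (k - 1) : ℝ) ≠ 0 := by positivity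
    field_simp
  have hderiv' : ∀ x, deriv f x = g x := fun x => (hderiv x).deriv
  set B : ℝ → ℝ := fun x => ∑ k ∈ Finset.Icc 1 p,
      (c k) ^ 2 * (x - xF) ^ (2 * (k - 1)) / ((Nat.factorial (k - 1) : ℝ)) ^ 2 with hB
  have hgB : ∀ x, (g x) ^ 2 ≤ (p : ℝ) * B x := by
    intro x
    have := sq_sum_le_card_mul_sum_sq (s := Finset.Icc 1 p)
      (f := fun k => c k * (x - xF) ^ (k - 1) / (Nat.factorial (k - 1)))
    simp only [Nat.card_Icc] at this
    calc (g x) ^ 2 ≤ (p + 1 - 1 : ℕ) * ∑ k ∈ Finset.Icc 1 p,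
          (c k * (x - xF) ^ (k - 1) / (Nat.factorial (k - 1))) ^ 2 := this
      _ = (p : ℝ) * B x := by
          simp only [Nat.add_sub_cancel, hB]
          congr 1
          apply Finset.sum_congr rfl
          intro k _
          rw [mul_comm 2 (k - 1), pow_mul, div_pow, mul_pow]
  have hgcont : Continuous g := by
    apply continuous_finset_sum
    intro k _
    fun_prop
  have hBcont : Continuous (fun x => (p : ℝ) * B x) := by
    apply Continuous.mul continuous_const
    apply continuous_finset_sum
    intro k _
    fun_prop
  have step1 : ∫ x in a..b, (deriv f x) ^ 2 ≤ ∫ x in a..b, (p : ℝ) * B x := by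
    simp only [hderiv']
    apply intervalIntegral.integral_mono_on hab
    · exact ((hgcont.pow 2).intervalIntegrable a b)
    · exact hBcont.intervalIntegrable a b
    · intro x _; exact hgB x
  refine step1.trans ?_
  rw [intervalIntegral.integral_const_mul]
  apply mul_le_mul_of_nonneg_left _ (by positivity)
  rw [hB, intervalIntegral.integral_finset_sum]
  swap
  · intro k _
    exact Continuous.intervalIntegrable (by fun_prop) a b
  apply Finset.sum_le_sum
  intro k hk
  have hk1 : 1 ≤ k := (Finset.mem_Icc.mp hk).1
  have hI : ∫ x in a..b, (c k) ^ 2 * (x - xF) ^ (2 * (k - 1)) / ((Nat.factorial (k - 1) : ℝ)) ^ 2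
      = (c k) ^ 2 / ((Nat.factorial (k - 1) : ℝ)) ^ 2 *
        (((b - xF) ^ (2 * k - 1) - (a - xF) ^ (2 * k - 1)) / (2 * (k : ℝ) - 1)) := by
    have h1 : ∀ x : ℝ, (c k) ^ 2 * (x - xF) ^ (2 * (k - 1)) / ((Nat.factorial (k - 1) : ℝ)) ^ 2
        = (c k) ^ 2 / ((Nat.factorial (k - 1) : ℝ)) ^ 2 * (x - xF) ^ (2 * (k - 1)) := by
      intro x; ring
    simp only [h1]
    rw [intervalIntegral.integral_const_mul]
    congr 1
    have h2 : ∫ x in a..b, (x - xF) ^ (2 * (k - 1))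
        = ∫ x in (a - xF)..(b - xF), x ^ (2 * (k - 1)) := by
      rw [intervalIntegral.integral_comp_sub_right (fun x => x ^ (2 * (k - 1))) xF]
    rw [h2, integral_pow]
    have he : 2 * (k - 1) + 1 = 2 * k - 1 := by omega
    rw [he]
    congr 1
    push_cast [Nat.cast_sub hk1]
    ring
  have hm : 2 * k - 1 ≠ 0 := by omega
  have hodd : Odd (2 * k - 1) := ⟨k - 1, by omega⟩
  have hbound : (b - xF) ^ (2 * k - 1) - (a - xF) ^ (2 * k - 1) ≤ (b - a) ^ (2 * k - 1) := by
    have h3 : (a - xF) ^ (2 * k - 1) = -((xF - a) ^ (2 * k - 1)) := by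
      rw [← hodd.neg_pow]; ring_nf
    rw [h3, sub_neg_eq_add]
    have h4 := pow_add_pow_le (x := b - xF) (y := xF - a) (by linarith) (by linarith) hm
    calc (b - xF) ^ (2 * k - 1) + (xF - a) ^ (2 * k - 1)
        ≤ ((b - xF) + (xF - a)) ^ (2 * k - 1) := h4
      _ = (b - a) ^ (2 * k - 1) := by ring_nf
  have hkpos : (0 : ℝ) < 2 * (k : ℝ) - 1 := by
    have h5 : (1 : ℝ) ≤ k := by exact_mod_cast hk1
    linarith
  have heq : (c k) ^ 2 * (b - a) ^ (2 * k - 1) /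
        (((Nat.factorial (k - 1) : ℝ)) ^ 2 * (2 * (k : ℝ) - 1))
      = (c k) ^ 2 / ((Nat.factorial (k - 1) : ℝ)) ^ 2 *
        ((b - a) ^ (2 * k - 1) / (2 * (k : ℝ) - 1)) := by
    have hf0 : (Nat.factorial (k - 1) : ℝ) ≠ 0 := by positivity
    field_simp
  rw [hI, heq]
  gcongr
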